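/- A cordon sanitaire is never anti-Pareto optimal (finite-dimensional version): let K be a nonnegative N×N matrix, η ∈ [0,1]^N nonzero, and suppose there exist disjoint nonempty sets A, B partitioning the support {i : η_i > 0} with (K·diag(η))_{ij} = 0 for i ∈ B, j ∈ A, and ρ(K·diag(η·1_A)) ≥ ρ(K·diag(η·1_B)). Then for every θ ∈ [0,1], the strategy η_θ = η·1_A + θ·η·1_B satisfies ρ(K·diag(η_θ)) = ρ(K·diag(η)). -/

import Mathlib

open Matrix Polynomial

namespace CordonAux

/-- Set of absolute values of complex roots of a polynomial. -/
def absRoots (p : ℂ[X]) : Set ℝ := {r : ℝ | ∃ z : ℂ, p.IsRoot z ∧ r = ‖z‖}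

noncomputable def sr (p : ℂ[X]) : ℝ := sSup (absRoots p)

lemma absRoots_finite {p : ℂ[X]} (hp : p ≠ 0) : (absRoots p).Finite := by
  have h : absRoots p = (fun z : ℂ => ‖z‖) '' {z | p.IsRoot z} := by
    ext r; constructor
    · rintro ⟨z, hz, rfl⟩; exact ⟨z, hz, rfl⟩
    · rintro ⟨z, hz, rfl⟩; exact ⟨z, hz, rfl⟩
  rw [h]; exact (Polynomial.finite_setOf_isRoot hp).image _

lemma absRoots_nonneg {p : ℂ[X]} {r : ℝ} (h : r ∈ absRoots p) : 0 ≤ r := by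
  obtain ⟨z, _, rfl⟩ := h; exact norm_nonneg z

lemma sr_nonneg {p : ℂ[X]} (hp : p ≠ 0) : 0 ≤ sr p := by
  rcases (absRoots p).eq_empty_or_nonempty with h | ⟨r, hr⟩
  · simp [sr, h, Real.sSup_empty]
  · exact le_trans (absRoots_nonneg hr) (le_csSup ((absRoots_finite hp).bddAbove) hr)

lemma absRoots_mul {p q : ℂ[X]} : absRoots (p * q) = absRoots p ∪ absRoots q := by
  ext r
  simp only [absRoots, Set.mem_setOf_eq, Set.mem_union, IsRoot, eval_mul, mul_eq_zero]
  constructor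
  · rintro ⟨z, h | h, rfl⟩
    · exact Or.inl ⟨z, h, rfl⟩
    · exact Or.inr ⟨z, h, rfl⟩
  · rintro (⟨z, h, rfl⟩ | ⟨z, h, rfl⟩)
    · exact ⟨z, Or.inl h, rfl⟩
    · exact ⟨z, Or.inr h, rfl⟩

lemma sr_mul {p q : ℂ[X]} (hp : p ≠ 0) (hq : q ≠ 0) : sr (p * q) = max (sr p) (sr q) := by
  unfold sr
  have hp0 : (0:ℝ) ≤ sr p := sr_nonneg hp
  have hq0 : (0:ℝ) ≤ sr q := sr_nonneg hq
  rw [absRoots_mul]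
  rcases (absRoots p).eq_empty_or_nonempty with h1 | h1
  · rw [h1, Set.empty_union]
    rw [Real.sSup_empty]
    exact (sup_eq_right.mpr hq0).symm
  · rcases (absRoots q).eq_empty_or_nonempty with h2 | h2
    · rw [h2, Set.union_empty]
      rw [Real.sSup_empty]
      exact (sup_eq_left.mpr hp0).symm
    · rw [csSup_union ((absRoots_finite hp).bddAbove) h1 ((absRoots_finite hq).bddAbove) h2]

lemma sr_X_pow (k : ℕ) : sr ((X : ℂ[X]) ^ k) = 0 := by
  have hsub : absRoots ((X : ℂ[X]) ^ k) ⊆ {0} := by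
    rintro r ⟨z, hz, rfl⟩
    simp only [IsRoot, eval_pow, eval_X] at hz
    have : z = 0 := by
      rcases pow_eq_zero_iff'.mp hz with ⟨h, -⟩
      exact h
    simp [this]
  rcases Set.subset_singleton_iff_eq.mp hsub with h | h
  · simp [sr, h, Real.sSup_empty]
  · simp [sr, h]

lemma charpoly_ne_zero {m : Type*} [Fintype m] [DecidableEq m] (M : Matrix m m ℂ) :
    M.charpoly ≠ 0 := (Matrix.charpoly_monic M).ne_zero

lemma absRoots_charpoly_nonempty {m : Type*} [Fintype m] [DecidableEq m] [Nonempty m]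
    (M : Matrix m m ℂ) : (absRoots M.charpoly).Nonempty := by
  have hdeg : M.charpoly.degree ≠ 0 := by
    rw [Matrix.charpoly_degree_eq_dim M]
    exact_mod_cast Fintype.card_ne_zero
  obtain ⟨z, hz⟩ := IsAlgClosed.exists_root M.charpoly hdeg
  exact ⟨‖z‖, z, hz, rfl⟩

lemma eval_charpoly' {m : Type*} [Fintype m] [DecidableEq m] (M : Matrix m m ℂ) (z : ℂ) :
    M.charpoly.eval z = (z • (1 : Matrix m m ℂ) - M).det := by
  have h : M.charpoly.eval z = ((charmatrix M).map (evalRingHom z)).det := by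
    rw [Matrix.charpoly, ← coe_evalRingHom, RingHom.map_det, RingHom.mapMatrix_apply]
  rw [h]
  congr 1
  ext i j
  by_cases hij : i = j
  · subst hij
    simp [charmatrix_apply_eq, Matrix.one_apply, Matrix.sub_apply, Matrix.smul_apply]
  · simp [charmatrix_apply_ne _ _ _ hij, Matrix.one_apply_ne hij, Matrix.sub_apply,
      Matrix.smul_apply]

lemma charpoly_zero_matrix {m : Type*} [Fintype m] [DecidableEq m] :
    (0 : Matrix m m ℂ).charpoly = X ^ Fintype.card m := by
  have h : charmatrix (0 : Matrix m m ℂ) = diagonal (fun _ => (X : ℂ[X])) := by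
    ext i j
    by_cases hij : i = j
    · subst hij; simp [charmatrix_apply_eq, diagonal_apply_eq]
    · simp [charmatrix_apply_ne _ _ _ hij, diagonal_apply_ne _ hij]
  rw [Matrix.charpoly, h, det_diagonal]
  simp [Finset.prod_const, Finset.card_univ]

lemma sr_charpoly_smul_le {m : Type*} [Fintype m] [DecidableEq m] [Nonempty m]
    (M : Matrix m m ℂ) {θ : ℝ} (h0 : 0 ≤ θ) (h1 : θ ≤ 1) :
    sr (((θ : ℂ) • M).charpoly) ≤ sr M.charpoly := by
  have hM : M.charpoly ≠ 0 := charpoly_ne_zero M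
  have hbdd := (absRoots_finite hM).bddAbove
  apply csSup_le (absRoots_charpoly_nonempty _)
  rintro r ⟨z, hz, rfl⟩
  rw [IsRoot, eval_charpoly'] at hz
  rcases eq_or_lt_of_le h0 with h | hpos
  · -- θ = 0
    rw [← h] at hz
    simp only [Complex.ofReal_zero, zero_smul, sub_zero] at hz
    rw [Matrix.det_smul, Matrix.det_one, mul_one] at hz
    have hz0 : z = 0 := pow_eq_zero_iff'.mp hz |>.1
    rw [hz0]
    simpa using sr_nonneg hM
  · have hc : (θ : ℂ) ≠ 0 := by exact_mod_cast hpos.ne'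
    have hfac : z • (1 : Matrix m m ℂ) - (θ : ℂ) • M
        = (θ : ℂ) • ((z / (θ : ℂ)) • (1 : Matrix m m ℂ) - M) := by
      rw [smul_sub, smul_smul, mul_div_cancel₀ _ hc]
    rw [hfac, Matrix.det_smul] at hz
    have hroot : M.charpoly.IsRoot (z / (θ : ℂ)) := by
      rw [IsRoot, eval_charpoly']
      rcases mul_eq_zero.mp hz with h | h
      · exact absurd h (pow_ne_zero _ hc)
      · exact h
    have hmem : ‖z / (θ : ℂ)‖ ∈ absRoots M.charpoly := ⟨_, hroot, rfl⟩
    have habs : ‖z‖ = θ * ‖z / (θ : ℂ)‖ := by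
      rw [norm_div, Complex.norm_of_nonneg h0]
      rw [mul_div_cancel₀ _ hpos.ne']
    rw [habs]
    calc θ * ‖z / (θ : ℂ)‖ ≤ 1 * ‖z / (θ : ℂ)‖ := by
          apply mul_le_mul_of_nonneg_right h1 (norm_nonneg _)
      _ = ‖z / (θ : ℂ)‖ := one_mul _
      _ ≤ sr M.charpoly := le_csSup hbdd hmem

end CordonAux

namespace CordonAux

lemma sr_calc {p q : ℂ[X]} (hp : p ≠ 0) (hq : q ≠ 0) (hp0 : 0 ≤ sr p) (k : ℕ) :
    sr ((X : ℂ[X]) ^ k * p * q) = max (sr p) (sr q) := by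
  rw [sr_mul (mul_ne_zero (pow_ne_zero _ X_ne_zero) hp) hq,
    sr_mul (pow_ne_zero _ X_ne_zero) hp, sr_X_pow, max_eq_right hp0]

lemma charpoly_mul_diagonal_factor {N : ℕ} (Kc : Matrix (Fin N) (Fin N) ℂ)
    (b : Fin N → Fin 3) (d : Fin N → ℂ)
    (hd0 : ∀ j, b j = 0 → d j = 0)
    (hcut : ∀ i j, b i = 2 → b j = 1 → Kc i j * d j = 0) :
    (Kc * diagonal d).charpoly
      = X ^ (Fintype.card {i // b i = 0})
        * ((Kc * diagonal d).toSquareBlock b 1).charpoly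
        * ((Kc * diagonal d).toSquareBlock b 2).charpoly := by
  have hbt : (Kc * diagonal d).BlockTriangular b := by
    intro i j hij
    rw [Matrix.mul_diagonal]
    have h3 : ∀ x : Fin 3, x = 0 ∨ x = 1 ∨ x = 2 := by decide
    rcases h3 (b i) with hi | hi | hi <;> rcases h3 (b j) with hj | hj | hj <;>
      rw [hi, hj] at hij <;>
      first
        | exact absurd hij (by decide)
        | rw [hd0 j hj, mul_zero]
        | exact hcut i j hi hj
  have hdet : (Kc * diagonal d).charpoly
      = ∏ k : Fin 3, ((Kc * diagonal d).toSquareBlock b k).charpoly := by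
    have h1 : (Kc * diagonal d).charpoly = (charmatrix (Kc * diagonal d)).det := rfl
    rw [h1, hbt.charmatrix.det_fintype]
    refine Finset.prod_congr rfl fun a _ => ?_
    rw [Matrix.charpoly, charmatrix_toSquareBlock]
  rw [hdet, Fin.prod_univ_three]
  have hz : (Kc * diagonal d).toSquareBlock b 0 = 0 := by
    ext i j
    simp [Matrix.toSquareBlock_def, Matrix.mul_diagonal, hd0 j.1 j.2]
  rw [hz, charpoly_zero_matrix]

end CordonAux

/-- The spectral radius of a real square matrix: the supremum of the moduli of its
complex eigenvalues (roots of the characteristic polynomial over `ℂ`). -/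
noncomputable def specRad {N : ℕ} (M : Matrix (Fin N) (Fin N) ℝ) : ℝ :=
  sSup {r : ℝ | ∃ z : ℂ, ((M.map (algebraMap ℝ ℂ)).charpoly).IsRoot z ∧ r = ‖z‖}

lemma specRad_eq_sr {N : ℕ} (M : Matrix (Fin N) (Fin N) ℝ) :
    specRad M = CordonAux.sr ((M.map (algebraMap ℝ ℂ)).charpoly) := rfl

theorem cordon_sanitaire_constant_loss {N : ℕ} (K : Matrix (Fin N) (Fin N) ℝ)
    (hK : ∀ i j, 0 ≤ K i j) (η : Fin N → ℝ) (hη : ∀ i, 0 ≤ η i ∧ η i ≤ 1)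
    (hηne : η ≠ 0) (A B : Finset (Fin N)) (hA : A.Nonempty) (hB : B.Nonempty)
    (hAB : Disjoint A B) (hsupp : ∀ i, 0 < η i ↔ i ∈ A ∪ B)
    (hcut : ∀ i ∈ B, ∀ j ∈ A, K i j * η j = 0)
    (hord : specRad (K * Matrix.diagonal (fun i => if i ∈ B then η i else 0)) ≤
      specRad (K * Matrix.diagonal (fun i => if i ∈ A then η i else 0)))
    (θ : ℝ) (hθ : θ ∈ Set.Icc (0 : ℝ) 1) :
    specRad (K * Matrix.diagonal
        (fun i => if i ∈ A then η i else if i ∈ B then θ * η i else 0)) =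
      specRad (K * Matrix.diagonal η) := by
  classical
  obtain ⟨hθ0, hθ1⟩ := hθ
  open CordonAux in
  set b : Fin N → Fin 3 := fun i => if i ∈ A then 1 else if i ∈ B then 2 else 0 with hbdef
  have hbA : ∀ {i}, i ∈ A → b i = 1 := fun {i} h => by simp [hbdef, h]
  have hbB : ∀ {i}, i ∈ B → b i = 2 := fun {i} h => by
    have hiA : i ∉ A := Finset.disjoint_right.mp hAB h
    simp [hbdef, hiA, h]
  have hb1 : ∀ {i}, b i = 1 → i ∈ A := by
    intro i h
    by_contra hiA
    by_cases hiB : i ∈ B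
    · rw [hbB hiB] at h; exact absurd h (by decide)
    · simp [hbdef, hiA, hiB] at h
  have hb2 : ∀ {i}, b i = 2 → i ∈ B := by
    intro i h
    by_cases hiA : i ∈ A
    · rw [hbA hiA] at h; exact absurd h (by decide)
    · by_cases hiB : i ∈ B
      · exact hiB
      · simp [hbdef, hiA, hiB] at h
  have hb0 : ∀ {i}, b i = 0 → i ∉ A ∧ i ∉ B := by
    intro i h
    by_cases hiA : i ∈ A
    · rw [hbA hiA] at h; exact absurd h (by decide)
    · by_cases hiB : i ∈ B
      · rw [hbB hiB] at h; exact absurd h (by decide)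
      · exact ⟨hiA, hiB⟩
  have hη0 : ∀ j, j ∉ A → j ∉ B → η j = 0 := by
    intro j h1 h2
    have hmem : j ∉ A ∪ B := by simp [Finset.mem_union, h1, h2]
    exact le_antisymm (not_lt.mp (fun h => hmem ((hsupp j).mp h))) (hη j).1
  set Kc : Matrix (Fin N) (Fin N) ℂ := K.map (algebraMap ℝ ℂ) with hKc
  have hmap : ∀ dR : Fin N → ℝ, (K * Matrix.diagonal dR).map (algebraMap ℝ ℂ)
      = Kc * Matrix.diagonal (fun i => ((dR i : ℝ) : ℂ)) := by
    intro dR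
    rw [Matrix.map_mul, Matrix.diagonal_map (map_zero _)]
    congr 1
  have hspec : ∀ dR : Fin N → ℝ, specRad (K * Matrix.diagonal dR)
      = CordonAux.sr ((Kc * Matrix.diagonal (fun i => ((dR i : ℝ) : ℂ))).charpoly) := by
    intro dR
    rw [specRad_eq_sr, hmap dR]
  -- complex diagonals
  set dF : Fin N → ℂ := fun i => ((η i : ℝ) : ℂ) with hdF
  set dθ : Fin N → ℂ :=
    fun i => (((if i ∈ A then η i else if i ∈ B then θ * η i else 0 : ℝ) : ℝ) : ℂ) with hdθ
  set dA : Fin N → ℂ := fun i => (((if i ∈ A then η i else 0 : ℝ) : ℝ) : ℂ) with hdA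
  set dB : Fin N → ℂ := fun i => (((if i ∈ B then η i else 0 : ℝ) : ℝ) : ℂ) with hdB
  -- cut condition in ℂ
  have hKcApply : ∀ i j, Kc i j = ((K i j : ℝ) : ℂ) := by
    intro i j; simp [hKc, Matrix.map_apply]
  have hcutC : ∀ i j, b i = 2 → b j = 1 → Kc i j * ((η j : ℝ) : ℂ) = 0 := by
    intro i j hi hj
    rw [hKcApply]
    have h := hcut i (hb2 hi) j (hb1 hj)
    have : ((K i j * η j : ℝ) : ℂ) = 0 := by rw [h]; simp
    rw [← this]; push_cast; ring
  -- factorizations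
  have hfacF := CordonAux.charpoly_mul_diagonal_factor Kc b dF
    (fun j h => by obtain ⟨h1, h2⟩ := hb0 h; simp [hdF, hη0 j h1 h2])
    (fun i j hi hj => hcutC i j hi hj)
  have hfacθ := CordonAux.charpoly_mul_diagonal_factor Kc b dθ
    (fun j h => by obtain ⟨h1, h2⟩ := hb0 h; simp [hdθ, h1, h2])
    (fun i j hi hj => by
      have hjA := hb1 hj
      have : dθ j = ((η j : ℝ) : ℂ) := by simp [hdθ, hjA]
      rw [this]; exact hcutC i j hi hj)
  have hfacA := CordonAux.charpoly_mul_diagonal_factor Kc b dA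
    (fun j h => by obtain ⟨h1, h2⟩ := hb0 h; simp [hdA, h1])
    (fun i j hi hj => by
      have hjA := hb1 hj
      have : dA j = ((η j : ℝ) : ℂ) := by simp [hdA, hjA]
      rw [this]; exact hcutC i j hi hj)
  have hfacB := CordonAux.charpoly_mul_diagonal_factor Kc b dB
    (fun j h => by obtain ⟨h1, h2⟩ := hb0 h; simp [hdB, h2])
    (fun i j hi hj => by
      have hjA := hb1 hj
      have hjB : j ∉ B := Finset.disjoint_left.mp hAB hjA
      have : dB j = 0 := by simp [hdB, hjB]
      rw [this, mul_zero])
  -- blocks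
  set P1 := ((Kc * Matrix.diagonal dF).toSquareBlock b 1).charpoly with hP1
  set P2 := ((Kc * Matrix.diagonal dF).toSquareBlock b 2).charpoly with hP2
  -- block identifications
  have hblk1θ : (Kc * Matrix.diagonal dθ).toSquareBlock b 1
      = (Kc * Matrix.diagonal dF).toSquareBlock b 1 := by
    ext i j
    have hj : j.1 ∈ A := hb1 j.2
    simp [Matrix.toSquareBlock_def, Matrix.mul_diagonal, hdθ, hdF, hj]
  have hblk2θ : (Kc * Matrix.diagonal dθ).toSquareBlock b 2
      = (θ : ℂ) • ((Kc * Matrix.diagonal dF).toSquareBlock b 2) := by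
    ext i j
    have hjB : j.1 ∈ B := hb2 j.2
    have hjA : j.1 ∉ A := Finset.disjoint_right.mp hAB hjB
    simp only [Matrix.toSquareBlock_def, Matrix.of_apply, Matrix.smul_apply,
      Matrix.mul_diagonal, hdθ, hdF, smul_eq_mul, hjA, hjB, if_true, if_false, ite_false]
    push_cast
    ring
  have hblk1A : (Kc * Matrix.diagonal dA).toSquareBlock b 1
      = (Kc * Matrix.diagonal dF).toSquareBlock b 1 := by
    ext i j
    have hj : j.1 ∈ A := hb1 j.2
    simp [Matrix.toSquareBlock_def, Matrix.mul_diagonal, hdA, hdF, hj]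
  have hblk2A : (Kc * Matrix.diagonal dA).toSquareBlock b 2 = 0 := by
    ext i j
    have hjB : j.1 ∈ B := hb2 j.2
    have hjA : j.1 ∉ A := Finset.disjoint_right.mp hAB hjB
    simp [Matrix.toSquareBlock_def, Matrix.mul_diagonal, hdA, hjA]
  have hblk1B : (Kc * Matrix.diagonal dB).toSquareBlock b 1 = 0 := by
    ext i j
    have hjA : j.1 ∈ A := hb1 j.2
    have hjB : j.1 ∉ B := Finset.disjoint_left.mp hAB hjA
    simp [Matrix.toSquareBlock_def, Matrix.mul_diagonal, hdB, hjB]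
  have hblk2B : (Kc * Matrix.diagonal dB).toSquareBlock b 2
      = (Kc * Matrix.diagonal dF).toSquareBlock b 2 := by
    ext i j
    have hj : j.1 ∈ B := hb2 j.2
    simp [Matrix.toSquareBlock_def, Matrix.mul_diagonal, hdB, hdF, hj]
  -- nonemptiness of blocks
  obtain ⟨a0, ha0⟩ := hA
  obtain ⟨b0, hb0'⟩ := hB
  haveI n1 : Nonempty {i // b i = 1} := ⟨⟨a0, hbA ha0⟩⟩
  haveI n2 : Nonempty {i // b i = 2} := ⟨⟨b0, hbB hb0'⟩⟩
  -- nonzeroness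
  have hP1ne : P1 ≠ 0 := CordonAux.charpoly_ne_zero _
  have hP2ne : P2 ≠ 0 := CordonAux.charpoly_ne_zero _
  have hP1nn : 0 ≤ CordonAux.sr P1 := CordonAux.sr_nonneg hP1ne
  have hP2nn : 0 ≤ CordonAux.sr P2 := CordonAux.sr_nonneg hP2ne
  -- compute the four spectral radii
  have hsF : specRad (K * Matrix.diagonal η)
      = max (CordonAux.sr P1) (CordonAux.sr P2) := by
    rw [hspec η]
    rw [show (fun i => ((η i : ℝ) : ℂ)) = dF from rfl]
    rw [hfacF, CordonAux.sr_calc hP1ne hP2ne hP1nn]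
  have hsA : specRad (K * Matrix.diagonal (fun i => if i ∈ A then η i else 0))
      = CordonAux.sr P1 := by
    rw [hspec (fun i => if i ∈ A then η i else 0)]
    rw [show (fun i => (((if i ∈ A then η i else 0 : ℝ) : ℝ) : ℂ)) = dA from rfl]
    rw [hfacA, hblk1A, hblk2A, CordonAux.charpoly_zero_matrix,
      CordonAux.sr_calc hP1ne (pow_ne_zero _ X_ne_zero) hP1nn, CordonAux.sr_X_pow,
      max_eq_left hP1nn]
  have hsB : specRad (K * Matrix.diagonal (fun i => if i ∈ B then η i else 0))
      = CordonAux.sr P2 := by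
    rw [hspec (fun i => if i ∈ B then η i else 0)]
    rw [show (fun i => (((if i ∈ B then η i else 0 : ℝ) : ℝ) : ℂ)) = dB from rfl]
    rw [hfacB, hblk1B, hblk2B, CordonAux.charpoly_zero_matrix,
      CordonAux.sr_calc (pow_ne_zero _ X_ne_zero) hP2ne (by rw [CordonAux.sr_X_pow]),
      CordonAux.sr_X_pow, max_eq_right hP2nn]
  have hPBA : CordonAux.sr P2 ≤ CordonAux.sr P1 := by
    rw [hsA, hsB] at hord; exact hord
  have hQle : CordonAux.sr (((θ : ℂ) • ((Kc * Matrix.diagonal dF).toSquareBlock b 2)).charpoly)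
      ≤ CordonAux.sr P2 :=
    CordonAux.sr_charpoly_smul_le _ hθ0 hθ1
  have hsθ : specRad (K * Matrix.diagonal
        (fun i => if i ∈ A then η i else if i ∈ B then θ * η i else 0))
      = CordonAux.sr P1 := by
    rw [hspec (fun i => if i ∈ A then η i else if i ∈ B then θ * η i else 0)]
    rw [show (fun i => (((if i ∈ A then η i else if i ∈ B then θ * η i else 0 : ℝ) : ℝ) : ℂ))
      = dθ from rfl]
    rw [hfacθ, hblk1θ, hblk2θ,
      CordonAux.sr_calc hP1ne (CordonAux.charpoly_ne_zero _) hP1nn,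
      max_eq_left (le_trans hQle hPBA)]
  rw [hsθ, hsF, max_eq_left hPBA]
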